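/- Let F : ℝⁿ → ℝ^m be Lipschitz and let boxes in B_k covering the Pareto set have widths tending uniformly to 0. Define the lower bound set L_k = {l(B) : B ∈ B_k} via the Lipschitz lower bounds and the upper bound set U_k = {F(c(B)) : B ∈ B_k}. Then the Hausdorff distance between L_k and U_k tends to 0 as k → ∞. -/

import Mathlib

/-- If all boxes (encoded as pairs `(a,b)`) in the collections `B_k` have widths at
most `δ_k → 0`, then the Hausdorff distance between the Lipschitz lower bound set
`L_k = {l(B) : B ∈ B_k}` and the midpoint upper bound set `U_k = {F(c(B)) : B ∈ B_k}`
tends to `0`. (The norm on `Fin n → ℝ` is the sup norm.) -/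
theorem hausdorff_lower_upper (n m : ℕ)
    (f : Fin m → (Fin n → ℝ) → ℝ)
    (L1 Linf : Fin m → ℝ)
    (h1 : ∀ i, ∀ x y : Fin n → ℝ, |f i x - f i y| ≤ L1 i * ‖x - y‖)
    (hinf : ∀ i, ∀ x y : Fin n → ℝ, |f i x - f i y| ≤ Linf i * ∑ j, |x j - y j|)
    (Bc : ℕ → Set ((Fin n → ℝ) × (Fin n → ℝ)))
    (hfin : ∀ k, (Bc k).Finite) (hne : ∀ k, (Bc k).Nonempty)
    (hab : ∀ k, ∀ p ∈ Bc k, ∀ i, p.1 i ≤ p.2 i)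
    (δ : ℕ → ℝ)
    (hwidth : ∀ k, ∀ p ∈ Bc k, ∀ i, p.2 i - p.1 i ≤ δ k)
    (hδ : Filter.Tendsto δ Filter.atTop (nhds 0)) :
    Filter.Tendsto
      (fun k => Metric.hausdorffDist
        ((fun p : (Fin n → ℝ) × (Fin n → ℝ) => fun i =>
            f i ((2⁻¹ : ℝ) • (p.1 + p.2)) -
              2⁻¹ * min (L1 i * ‖p.2 - p.1‖) (Linf i * ∑ j, |p.2 j - p.1 j|)) '' Bc k)
        ((fun p : (Fin n → ℝ) × (Fin n → ℝ) => fun i =>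
            f i ((2⁻¹ : ℝ) • (p.1 + p.2))) '' Bc k))
      Filter.atTop (nhds 0) := by
  set C : ℝ := ∑ i, (|L1 i| + n * |Linf i|) with hCdef
  have hC0 : 0 ≤ C := Finset.sum_nonneg fun i _ => by positivity
  set lmap := fun p : (Fin n → ℝ) × (Fin n → ℝ) => fun i =>
      f i ((2⁻¹ : ℝ) • (p.1 + p.2)) -
        2⁻¹ * min (L1 i * ‖p.2 - p.1‖) (Linf i * ∑ j, |p.2 j - p.1 j|) with hlmap
  set umap := fun p : (Fin n → ℝ) × (Fin n → ℝ) => fun i =>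
      f i ((2⁻¹ : ℝ) • (p.1 + p.2)) with humap
  have key : ∀ k, Metric.hausdorffDist (lmap '' Bc k) (umap '' Bc k)
      ≤ 2⁻¹ * C * max (δ k) 0 := by
    intro k
    have hδ0 : 0 ≤ max (δ k) 0 := le_max_right _ _
    have hr0 : 0 ≤ 2⁻¹ * C * max (δ k) 0 := by positivity
    have hdist : ∀ p ∈ Bc k, dist (lmap p) (umap p) ≤ 2⁻¹ * C * max (δ k) 0 := by
      intro p hp
      rw [dist_pi_le_iff hr0]
      intro i
      have hnorm : ‖p.2 - p.1‖ ≤ max (δ k) 0 := by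
        rw [pi_norm_le_iff_of_nonneg hδ0]
        intro j
        have h1 := hab k p hp j
        have h2 := hwidth k p hp j
        rw [Real.norm_eq_abs]
        simp only [Pi.sub_apply]
        rw [abs_of_nonneg (by linarith)]
        exact le_trans h2 (le_max_left _ _)
      have hsum : ∑ j, |p.2 j - p.1 j| ≤ n * max (δ k) 0 := by
        calc ∑ j, |p.2 j - p.1 j| ≤ ∑ _j : Fin n, max (δ k) 0 := by
              apply Finset.sum_le_sum
              intro j _
              have h1 := hab k p hp j
              have h2 := hwidth k p hp j
              rw [abs_of_nonneg (by linarith)]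
              exact le_trans h2 (le_max_left _ _)
          _ = n * max (δ k) 0 := by simp [mul_comm]
      have hsum0 : 0 ≤ ∑ j, |p.2 j - p.1 j| :=
        Finset.sum_nonneg fun j _ => abs_nonneg _
      set A := L1 i * ‖p.2 - p.1‖
      set B := Linf i * ∑ j, |p.2 j - p.1 j|
      have hA : |A| ≤ C * max (δ k) 0 := by
        have : |A| = |L1 i| * ‖p.2 - p.1‖ := by
          rw [abs_mul, abs_of_nonneg (norm_nonneg _)]
        rw [this]
        have hL1C : |L1 i| ≤ C := by
          rw [hCdef]
          calc |L1 i| ≤ |L1 i| + n * |Linf i| := le_add_of_nonneg_right (by positivity)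
            _ ≤ _ := Finset.single_le_sum (f := fun i => |L1 i| + (n:ℝ) * |Linf i|)
                (fun j _ => by positivity) (Finset.mem_univ i)
        calc |L1 i| * ‖p.2 - p.1‖ ≤ |L1 i| * max (δ k) 0 :=
              mul_le_mul_of_nonneg_left hnorm (abs_nonneg _)
          _ ≤ C * max (δ k) 0 := mul_le_mul_of_nonneg_right hL1C hδ0
      have hB : |B| ≤ C * max (δ k) 0 := by
        have : |B| = |Linf i| * ∑ j, |p.2 j - p.1 j| := by
          rw [abs_mul, abs_of_nonneg hsum0]
        rw [this]
        have hLC : (n : ℝ) * |Linf i| ≤ C := by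
          rw [hCdef]
          calc (n:ℝ) * |Linf i| ≤ |L1 i| + n * |Linf i| := le_add_of_nonneg_left (abs_nonneg _)
            _ ≤ _ := Finset.single_le_sum (f := fun i => |L1 i| + (n:ℝ) * |Linf i|)
                (fun j _ => by positivity) (Finset.mem_univ i)
        calc |Linf i| * ∑ j, |p.2 j - p.1 j| ≤ |Linf i| * (n * max (δ k) 0) :=
              mul_le_mul_of_nonneg_left hsum (abs_nonneg _)
          _ = (n * |Linf i|) * max (δ k) 0 := by ring
          _ ≤ C * max (δ k) 0 := mul_le_mul_of_nonneg_right hLC hδ0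
      have hminabs : |min A B| ≤ C * max (δ k) 0 := by
        rcases le_total A B with h | h
        · rw [min_eq_left h]; exact hA
        · rw [min_eq_right h]; exact hB
      have : dist (lmap p i) (umap p i) = |2⁻¹ * min A B| := by
        simp only [hlmap, humap, Real.dist_eq, sub_sub_cancel_left, abs_neg]
        rfl
      rw [this, abs_mul, abs_of_nonneg (by norm_num : (0:ℝ) ≤ 2⁻¹), mul_assoc]
      exact mul_le_mul_of_nonneg_left hminabs (by norm_num)
    apply Metric.hausdorffDist_le_of_mem_dist hr0
    · rintro x ⟨p, hp, rfl⟩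
      exact ⟨umap p, Set.mem_image_of_mem _ hp, hdist p hp⟩
    · rintro y ⟨p, hp, rfl⟩
      exact ⟨lmap p, Set.mem_image_of_mem _ hp, (dist_comm (lmap p) (umap p)) ▸ hdist p hp⟩
  have hlim : Filter.Tendsto (fun k => 2⁻¹ * C * max (δ k) 0)
      Filter.atTop (nhds 0) := by
    have : Filter.Tendsto (fun k => max (δ k) 0) Filter.atTop (nhds (max 0 0)) :=
      hδ.max tendsto_const_nhds
    simpa using this.const_mul (2⁻¹ * C)
  exact squeeze_zero (fun k => Metric.hausdorffDist_nonneg) key hlim
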